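/- The fermionic identity: for odd derivations ∂_{c_i}, ∂_{b_i} on an exterior algebra, setting Y^{ml} = ∂_{c_m}∂_{b_l} + ∂_{c_l}∂_{b_m}, the totally symmetrized product over the four indices vanishes identically: Y^{(ml} Y^{ps)} = 0 (symmetrization over m,l,p,s). -/
import Mathlib

private lemma anticomm_swap {A : Type*} [Ring A] {a b : A}
    (h : a * b + b * a = 0) : b * a = -(a * b) :=
  eq_neg_of_add_eq_zero_left (by linear_combination (norm := noncomm_ring) h)

private lemma anticomm_swap' {A : Type*} [Ring A] {a b : A}
    (h : a * b + b * a = 0) (x : A) : b * (a * x) = -(a * (b * x)) := by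
  rw [← mul_assoc, anticomm_swap h, neg_mul, mul_assoc]

/-- Fermionic identity: for odd derivations `∂_{c_i}, ∂_{b_i}` on an exterior
algebra (mutually anticommuting), setting
`Y^{ml} = ∂_{c_m}∂_{b_l} + ∂_{c_l}∂_{b_m}`, the totally symmetrized product
over the four indices vanishes identically: `Y^{(ml} Y^{ps)} = 0`, i.e.
`Y^{ml}Y^{ps} + Y^{mp}Y^{ls} + Y^{ms}Y^{lp} = 0` for all `m, l, p, s`. -/
theorem fermionic_YY_identity
    {A : Type*} [Ring A] (n : ℕ)
    (dc db : Fin n → A)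
    (hdcdc : ∀ i j, dc i * dc j + dc j * dc i = 0)
    (hdbdb : ∀ i j, db i * db j + db j * db i = 0)
    (hdcdb : ∀ i j, dc i * db j + db j * dc i = 0)
    (Y : Fin n → Fin n → A)
    (hY : ∀ m l, Y m l = dc m * db l + dc l * db m) :
    ∀ m l p s, Y m l * Y p s + Y m p * Y l s + Y m s * Y l p = 0 := by
  intro m l p s
  have mix : ∀ i j, db j * dc i = -(dc i * db j) := fun i j => anticomm_swap (hdcdb i j)
  have mix' : ∀ i j (x : A), db j * (dc i * x) = -(dc i * (db j * x)) :=
    fun i j => anticomm_swap' (hdcdb i j)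
  simp only [hY, mul_add, add_mul, mul_assoc,
    mix, mix',
    anticomm_swap (hdcdc m l), anticomm_swap' (hdcdc m l),
    anticomm_swap (hdcdc m p), anticomm_swap' (hdcdc m p),
    anticomm_swap (hdcdc m s), anticomm_swap' (hdcdc m s),
    anticomm_swap (hdcdc l p), anticomm_swap' (hdcdc l p),
    anticomm_swap (hdcdc l s), anticomm_swap' (hdcdc l s),
    anticomm_swap (hdcdc p s), anticomm_swap' (hdcdc p s),
    anticomm_swap (hdbdb m l), anticomm_swap' (hdbdb m l),
    anticomm_swap (hdbdb m p), anticomm_swap' (hdbdb m p),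
    anticomm_swap (hdbdb m s), anticomm_swap' (hdbdb m s),
    anticomm_swap (hdbdb l p), anticomm_swap' (hdbdb l p),
    anticomm_swap (hdbdb l s), anticomm_swap' (hdbdb l s),
    anticomm_swap (hdbdb p s), anticomm_swap' (hdbdb p s),
    mul_neg, neg_mul, neg_neg]
  abel
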